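/- Demographic Influence generalizes Demi-Quantum Nim: let A : Fin m → Fin n → ℕ be a Demi-Quantum Nim position with m realizations and n heaps. Define the Demographic Influence position Z' = (G, Θ, D) with vertex set V = Fin m × Fin n, where (r₁, c₁) and (r₂, c₂) are adjacent iff r₁ = r₂ and (r₁, c₁) ≠ (r₂, c₂) (each realization's vertices form a clique), Θ((r, c)) = A r c, and demographics D_c = { (r, c) : r ∈ Fin m } for each c ∈ Fin n. Then the Demi-Quantum Nim game on A is isomorphic (as a game tree, via the move correspondence (k, q) ↔ (D_k, q)) to the Demographic Influence game on Z'. -/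

import Mathlib

open scoped Classical

noncomputable section

namespace TW

variable {ι κ : Type*}

/-- A column `j` of a Crosswise AND position is feasible if it contains a `true` (green) entry. -/
def Feasible (B : ι → κ → Bool) (j : κ) : Prop := ∃ i, B i j = true

/-- The Crosswise AND move at column `j`: if `B i j = false` then row `i` becomes all false;
otherwise row `i` is unchanged except that entry `(i, j)` becomes false. -/
def move (B : ι → κ → Bool) (j : κ) : ι → κ → Bool :=
  fun i j' => if B i j = false then false else if j' = j then false else B i j'

/-- A Demographic Influence move `(Dk, q)` is feasible if `q ≥ 1` and some member of the
demographic `Dk` has threshold at least `q`. -/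
def diFeasible {V : Type*} (Θ : V → ℤ) (Dk : Finset V) (q : ℕ) : Prop :=
  1 ≤ q ∧ ∃ v ∈ Dk, (q : ℤ) ≤ Θ v

/-- The Demographic Influence move `(Dk, q)`: first every member of `Dk` has its value
reduced by `q`; then every member of `Dk` whose value was `≥ 0` before the move and is
`< 0` after the subtraction sets the value of each of its neighbours in `G` to `-1`. -/
def diMove {V : Type*} (G : SimpleGraph V) (Dk : Finset V) (Θ : V → ℤ) (q : ℕ) :
    V → ℤ :=
  fun v =>
    if ∃ u ∈ Dk, 0 ≤ Θ u ∧ Θ u - q < 0 ∧ G.Adj u v then -1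
    else if v ∈ Dk then Θ v - q else Θ v

/-- A Demi-Quantum Nim move `(k, q)` (take `q ≥ 1` pebbles from heap `k`) is feasible if
some realization has at least `q` pebbles in heap `k`. -/
def dqFeasible {m n : ℕ} (A : Fin m → Fin n → ℕ) (k : Fin n) (q : ℕ) : Prop :=
  1 ≤ q ∧ ∃ r, q ≤ A r k

/-- The Demi-Quantum Nim move `(k, q)`: every realization with fewer than `q` pebbles in
heap `k` collapses (becomes the all-zero row), and every other realization has `q`
pebbles removed from heap `k`. -/
def dqMove {m n : ℕ} (A : Fin m → Fin n → ℕ) (k : Fin n) (q : ℕ) :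
    Fin m → Fin n → ℕ :=
  fun r c => if A r k < q then 0 else if c = k then A r k - q else A r c

theorem dq_measure_lt {m n : ℕ} {A : Fin m → Fin n → ℕ} {k : Fin n} {q : ℕ}
    (h : dqFeasible A k q) :
    (∑ p : Fin m × Fin n, dqMove A k q p.1 p.2) < ∑ p : Fin m × Fin n, A p.1 p.2 := by
  obtain ⟨hq, r, hr⟩ := h
  refine Finset.sum_lt_sum (fun p _ => ?_) ⟨(r, k), Finset.mem_univ _, ?_⟩
  · unfold dqMove
    split_ifs with h1 h2
    · exact Nat.zero_le _
    · rw [h2]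
      exact Nat.sub_le _ _
    · exact le_refl _
  · unfold dqMove
    simp only [if_neg (Nat.not_lt.mpr hr), if_pos rfl]
    exact Nat.sub_lt (by omega) (by omega)

/-- `DQDIEq G D A Θ` says that the Demi-Quantum Nim game on `A` and the Demographic
Influence game on `(G, Θ, D)` have isomorphic game trees via the move correspondence
`(k, q) ↔ (D k, q)`. -/
def DQDIEq {m n : ℕ} {V : Type*} (G : SimpleGraph V) (D : Fin n → Finset V)
    (A : Fin m → Fin n → ℕ) (Θ : V → ℤ) : Prop :=
  ∀ (k : Fin n) (q : ℕ), (dqFeasible A k q ↔ diFeasible Θ (D k) q) ∧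
    ∀ _ : dqFeasible A k q, DQDIEq G D (dqMove A k q) (diMove G (D k) Θ q)
termination_by ∑ p : Fin m × Fin n, A p.1 p.2
decreasing_by
  rename_i h
  exact dq_measure_lt h

/-- The graph in which the vertices of each realization (row) form a clique. -/
def rowGraph (m n : ℕ) : SimpleGraph (Fin m × Fin n) where
  Adj p p' := p.1 = p'.1 ∧ p ≠ p'
  symm := by
    constructor
    rintro p p' ⟨h1, h2⟩
    exact ⟨h1.symm, h2.symm⟩
  loopless := by
    constructor
    rintro p ⟨h1, h2⟩
    exact h2 rfl

theorem aux13 {m n : ℕ} (A : Fin m → Fin n → ℕ) (Θ : Fin m × Fin n → ℤ)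
    (hInv : ∀ r : Fin m,
      (∀ c, Θ (r, c) = (A r c : ℤ)) ∨ (∀ c, Θ (r, c) < 0 ∧ A r c = 0)) :
    DQDIEq (rowGraph m n)
      (fun k => Finset.univ.filter fun p : Fin m × Fin n => p.2 = k) A Θ := by
  rw [DQDIEq]
  intro k q
  constructor
  · constructor
    · rintro ⟨hq, r, hr⟩
      refine ⟨hq, (r, k), by simp, ?_⟩
      rcases hInv r with h | h
      · rw [h k]; exact_mod_cast hr
      · have := (h k).2; omega
    · rintro ⟨hq, v, hv, hΘ⟩
      simp only [Finset.mem_filter, Finset.mem_univ, true_and] at hv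
      refine ⟨hq, v.1, ?_⟩
      rcases hInv v.1 with h | h
      · have h2 : (q : ℤ) ≤ (A v.1 v.2 : ℤ) := by
          rw [← h v.2]; exact hΘ
        rw [hv] at h2
        exact_mod_cast h2
      · have h1 : Θ v < 0 := (h v.2).1
        have h2 : (q : ℤ) ≤ Θ v := hΘ
        omega
  · intro hfeas
    have hq : 1 ≤ q := hfeas.1
    apply aux13
    intro r
    have hUforce : ∀ c : Fin n, ∀ u : Fin m × Fin n,
        u ∈ (Finset.univ.filter fun p : Fin m × Fin n => p.2 = k) →
        (rowGraph m n).Adj u (r, c) → u = (r, k) := by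
      intro c u hu hadj
      simp only [Finset.mem_filter, Finset.mem_univ, true_and] at hu
      exact Prod.ext hadj.1 hu
    rcases hInv r with h | h
    · by_cases hk : q ≤ A r k
      · left
        intro c
        have hC : ¬ ∃ u ∈ (Finset.univ.filter fun p : Fin m × Fin n => p.2 = k),
            0 ≤ Θ u ∧ Θ u - q < 0 ∧ (rowGraph m n).Adj u (r, c) := by
          rintro ⟨u, hu, h0, hlt, hadj⟩
          have heq := hUforce c u hu hadj
          rw [heq, h k] at hlt
          omega
        show diMove _ _ Θ q (r, c) = _
        unfold diMove dqMove
        rw [if_neg hC]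
        by_cases hc : c = k
        · subst hc
          rw [if_pos (by simp), if_neg (not_lt.mpr hk), if_pos rfl, h c,
            Nat.cast_sub hk]
        · rw [if_neg (by simp [hc]), if_neg (not_lt.mpr hk), if_neg hc, h c]
      · right
        intro c
        have hlt : A r k < q := not_le.mp hk
        constructor
        · show diMove _ _ Θ q (r, c) < 0
          unfold diMove
          by_cases hc : c = k
          · subst hc
            have hC : ¬ ∃ u ∈ (Finset.univ.filter fun p : Fin m × Fin n => p.2 = c),
                0 ≤ Θ u ∧ Θ u - q < 0 ∧ (rowGraph m n).Adj u (r, c) := by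
              rintro ⟨u, hu, h0, hlt', hadj⟩
              have heq := hUforce c u hu hadj
              rw [heq] at hadj
              exact hadj.2 rfl
            rw [if_neg hC, if_pos (by simp), h c]
            have : (A r c : ℤ) < q := by exact_mod_cast hlt
            omega
          · have hC : ∃ u ∈ (Finset.univ.filter fun p : Fin m × Fin n => p.2 = k),
                0 ≤ Θ u ∧ Θ u - q < 0 ∧ (rowGraph m n).Adj u (r, c) := by
              refine ⟨(r, k), by simp, ?_, ?_, rfl, ?_⟩
              · rw [h k]; positivity
              · rw [h k]
                have : (A r k : ℤ) < q := by exact_mod_cast hlt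
                omega
              · simp [Prod.ext_iff, hc]
                intro h'
                exact hc h'.symm
            rw [if_pos hC]
            omega
        · show dqMove A k q r c = 0
          unfold dqMove
          rw [if_pos hlt]
    · right
      intro c
      have hzero : A r k = 0 := (h k).2
      have hlt : A r k < q := by omega
      have hC : ¬ ∃ u ∈ (Finset.univ.filter fun p : Fin m × Fin n => p.2 = k),
          0 ≤ Θ u ∧ Θ u - q < 0 ∧ (rowGraph m n).Adj u (r, c) := by
        rintro ⟨u, hu, h0, hlt', hadj⟩
        have heq := hUforce c u hu hadj
        rw [heq] at h0
        have := (h k).1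
        omega
      constructor
      · show diMove _ _ Θ q (r, c) < 0
        unfold diMove
        rw [if_neg hC]
        by_cases hc : c = k
        · rw [if_pos (by simp [hc])]
          have := (h c).1
          omega
        · rw [if_neg (by simp [hc])]
          exact (h c).1
      · show dqMove A k q r c = 0
        unfold dqMove
        rw [if_pos hlt]
termination_by ∑ p : Fin m × Fin n, A p.1 p.2
decreasing_by
  exact dq_measure_lt hfeas

/-- Demographic Influence generalizes Demi-Quantum Nim.  For a Demi-Quantum
Nim position `A` with `m` realizations and `n` heaps, the Demi-Quantum Nim game on `A` is
isomorphic, via the move correspondence `(k, q) ↔ (D_k, q)`, to the Demographic Influence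
game on `Z' = (G, Θ, D)` where the vertex set is `Fin m × Fin n`, the vertices of each
realization form a clique, `Θ (r, c) = A r c`, and `D_c = {(r, c) : r ∈ Fin m}`. -/
theorem stmt13 {m n : ℕ} (A : Fin m → Fin n → ℕ) :
    DQDIEq (rowGraph m n)
      (fun k => Finset.univ.filter fun p : Fin m × Fin n => p.2 = k)
      A (fun p => (A p.1 p.2 : ℤ)) :=
  aux13 A _ (fun _ => Or.inl fun _ => rfl)

end TW
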